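/- Let a = (a1,a2), b = (b1,b2) ∈ ℝ² with a1*b1 > 0, a2*b2 > 0, |a1| ≥ |a2|, and let q1 = ⌊a1/b1⌋₀, q2 = ⌊a2/b2⌋₀ with q1 > q2. Define a' = b and b' = a - q1·b = (b1', b2'). Then sign(b1') = sign(b1) (or b1' = 0), sign(b2') ≠ sign(b2) (or b2' = 0), and hence a1'·a2'·b1'·b2' ≤ 0. -/

import Mathlib

/-- Rounding toward zero. -/
noncomputable def rtz (x : ℝ) : ℤ := if 0 ≤ x then ⌊x⌋ else ⌈x⌉

/-- Let `a = (a1,a2)`, `b = (b1,b2)` with `a1*b1 > 0`, `a2*b2 > 0`,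
`|a1| ≥ |a2|`, and rounded-toward-zero quotients `q1 = ⌊a1/b1⌋₀ > q2 = ⌊a2/b2⌋₀`.
Define `a' = b` and `b' = a - q1•b = (b1', b2')`. Then `sign b1' = sign b1`
(or `b1' = 0`), `sign b2' ≠ sign b2` (or `b2' = 0`), and hence
`a1'*a2'*b1'*b2' ≤ 0`. -/
theorem stmt19 (a1 a2 b1 b2 : ℝ)
    (h1 : a1 * b1 > 0) (h2 : a2 * b2 > 0)
    (ha : |a1| ≥ |a2|) (hb1 : b1 ≠ 0) (hb2 : b2 ≠ 0)
    (q1 q2 : ℤ) (hq1 : q1 = rtz (a1 / b1)) (hq2 : q2 = rtz (a2 / b2))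
    (hqq : q1 > q2)
    (b1' b2' : ℝ) (hb1' : b1' = a1 - (q1 : ℝ) * b1) (hb2' : b2' = a2 - (q1 : ℝ) * b2) :
    (b1' = 0 ∨ Real.sign b1' = Real.sign b1) ∧
    (b2' = 0 ∨ Real.sign b2' ≠ Real.sign b2) ∧
    b1 * b2 * b1' * b2' ≤ 0 := by
  set r1 : ℝ := a1 / b1 with hr1
  set r2 : ℝ := a2 / b2 with hr2
  have hr1pos : 0 < r1 := div_pos_iff.mpr (by rcases mul_pos_iff.mp h1 with h | h <;> [left; right] <;> exact h)
  have hr2pos : 0 < r2 := div_pos_iff.mpr (by rcases mul_pos_iff.mp h2 with h | h <;> [left; right] <;> exact h)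
  have hq1' : q1 = ⌊r1⌋ := by rw [hq1, rtz, if_pos hr1pos.le]
  have hq2' : q2 = ⌊r2⌋ := by rw [hq2, rtz, if_pos hr2pos.le]
  have ha1 : a1 = b1 * r1 := by rw [hr1]; field_simp
  have ha2 : a2 = b2 * r2 := by rw [hr2]; field_simp
  have hb1'eq : b1' = b1 * (r1 - q1) := by rw [hb1', ha1]; ring
  have hb2'eq : b2' = b2 * (r2 - q1) := by rw [hb2', ha2]; ring
  have h1nn : 0 ≤ r1 - q1 := by
    have := Int.floor_le r1; rw [hq1']; linarith
  have h2neg : r2 - q1 < 0 := by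
    have h := Int.lt_floor_add_one r2
    have : (q2 : ℝ) + 1 ≤ q1 := by exact_mod_cast hqq
    rw [hq2'] at this
    linarith
  have hb2'ne : b2' ≠ 0 := by
    rw [hb2'eq]; exact mul_ne_zero hb2 (by linarith)
  refine ⟨?_, ?_, ?_⟩
  · rcases eq_or_lt_of_le h1nn with h | h
    · left; rw [hb1'eq, ← h, mul_zero]
    · right
      rcases lt_or_gt_of_ne hb1 with hneg | hpos
      · have : b1' < 0 := by rw [hb1'eq]; exact mul_neg_of_neg_of_pos hneg h
        rw [Real.sign_of_neg this, Real.sign_of_neg hneg]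
      · have : 0 < b1' := by rw [hb1'eq]; positivity
        rw [Real.sign_of_pos this, Real.sign_of_pos hpos]
  · right
    rcases lt_or_gt_of_ne hb2 with hneg | hpos
    · have : 0 < b2' := by rw [hb2'eq]; exact mul_pos_of_neg_of_neg hneg h2neg
      rw [Real.sign_of_pos this, Real.sign_of_neg hneg]; norm_num
    · have : b2' < 0 := by rw [hb2'eq]; exact mul_neg_of_pos_of_neg hpos h2neg
      rw [Real.sign_of_neg this, Real.sign_of_pos hpos]; norm_num
  · rw [hb1'eq, hb2'eq]
    have hsq1 : 0 ≤ b1 ^ 2 * (r1 - q1) := by positivity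
    have hsq2 : b2 ^ 2 * (r2 - q1) ≤ 0 :=
      mul_nonpos_of_nonneg_of_nonpos (sq_nonneg b2) h2neg.le
    have key : b1 * b2 * (b1 * (r1 - q1)) * (b2 * (r2 - q1))
        = (b1 ^ 2 * (r1 - q1)) * (b2 ^ 2 * (r2 - q1)) := by ring
    rw [key]
    exact mul_nonpos_of_nonneg_of_nonpos hsq1 hsq2
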